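/- Let ε > 0 and δ > 0. Suppose a partition P of Ω refines the level-set partition Θ_Q of E_Q, and suppose μ({ω : |E_P(ω) − E_Q(ω)| > ε}) ≥ δ. Then ‖E_P‖₂² > ‖E_Q‖₂² + δε². -/

import Mathlib

open scoped Classical BigOperators

/-- A partition of a finite type, given by the cell containing each point. -/
structure FinPartition (Ω : Type*) [Fintype Ω] [DecidableEq Ω] where
  cell : Ω → Finset Ω
  mem_cell : ∀ ω, ω ∈ cell ω
  cell_eq : ∀ ω ω', ω' ∈ cell ω → cell ω' = cell ω

variable {Ω : Type*} [Fintype Ω] [DecidableEq Ω]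

/-- Conditional expectation `E[g | S]` of `g` over `S` under the weights `μ`. -/
noncomputable def condExp (μ g : Ω → ℝ) (S : Finset Ω) : ℝ :=
  (∑ ω ∈ S, μ ω * g ω) / ∑ ω ∈ S, μ ω

/-- `E_P(ω) = E[f | P(ω)]`, the partition-conditional expectation of `f`. -/
noncomputable def expOn (μ f : Ω → ℝ) (P : FinPartition Ω) (ω : Ω) : ℝ :=
  condExp μ f (P.cell ω)

/-- The cell `Θ_P(ω) = {ω' : E_P(ω') = E_P(ω)}` of the level-set partition of `E_P`. -/
noncomputable def levelCell (μ f : Ω → ℝ) (P : FinPartition Ω) (ω : Ω) : Finset Ω :=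
  Finset.univ.filter fun ω' => expOn μ f P ω' = expOn μ f P ω

/-- `P` refines `Q`: every cell of `P` is contained in the corresponding cell of `Q`. -/
def FinPartition.Refines (P Q : FinPartition Ω) : Prop := ∀ ω, P.cell ω ⊆ Q.cell ω

/-- The squared 2-norm `‖F‖₂² = Σ_ω μ(ω) F(ω)²`. -/
noncomputable def norm2 (μ F : Ω → ℝ) : ℝ := ∑ ω, μ ω * F ω ^ 2

lemma cell_filter (P : FinPartition Ω) (ω₀ : Ω) :
    Finset.univ.filter (fun ω => P.cell ω = P.cell ω₀) = P.cell ω₀ := by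
  ext ω
  simp only [Finset.mem_filter, Finset.mem_univ, true_and]
  constructor
  · intro h; rw [← h]; exact P.mem_cell ω
  · intro h; exact P.cell_eq _ _ h

lemma key_orth (μ f h : Ω → ℝ) (hμ : ∀ ω, 0 < μ ω) (P : FinPartition Ω)
    (hc : ∀ ω ω', ω' ∈ P.cell ω → h ω' = h ω) :
    ∑ ω, μ ω * (h ω * (f ω - expOn μ f P ω)) = 0 := by
  rw [← Finset.sum_fiberwise_of_maps_to (g := P.cell) (t := Finset.univ.image P.cell)
    (fun x _ => Finset.mem_image_of_mem _ (Finset.mem_univ x))]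
  apply Finset.sum_eq_zero
  intro c hc'
  obtain ⟨ω₀, -, rfl⟩ := Finset.mem_image.mp hc'
  rw [cell_filter]
  have hpos : 0 < ∑ ω ∈ P.cell ω₀, μ ω :=
    Finset.sum_pos (fun ω _ => hμ ω) ⟨ω₀, P.mem_cell ω₀⟩
  have heq : ∀ ω ∈ P.cell ω₀, μ ω * (h ω * (f ω - expOn μ f P ω))
      = h ω₀ * (μ ω * f ω - μ ω * condExp μ f (P.cell ω₀)) := by
    intro ω hω
    rw [hc ω₀ ω hω, expOn, P.cell_eq ω₀ ω hω]
    ring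
  rw [Finset.sum_congr rfl heq, ← Finset.mul_sum, Finset.sum_sub_distrib,
    ← Finset.sum_mul, condExp]
  field_simp
  ring

theorem stmt_2 [Nonempty Ω] (μ f : Ω → ℝ)
    (hμpos : ∀ ω, 0 < μ ω) (hμsum : ∑ ω, μ ω = 1)
    (ε δ : ℝ) (hε : 0 < ε) (hδ : 0 < δ)
    (P Q : FinPartition Ω)
    (hrefine : ∀ ω, P.cell ω ⊆ levelCell μ f Q ω)
    (hdisagree : δ ≤ ∑ ω ∈ Finset.univ.filter
        (fun ω => ε < |expOn μ f P ω - expOn μ f Q ω|), μ ω) :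
    norm2 μ (expOn μ f Q) + δ * ε ^ 2 < norm2 μ (expOn μ f P) := by
  set EP := expOn μ f P with hEP
  set EQ := expOn μ f Q with hEQ
  -- cross term vanishes
  have h1 : ∑ ω, μ ω * (EQ ω * (f ω - EP ω)) = 0 := by
    apply key_orth μ f EQ hμpos P
    intro ω ω' hω'
    have := hrefine ω hω'
    simpa [levelCell] using this
  have h2 : ∑ ω, μ ω * (EQ ω * (f ω - EQ ω)) = 0 := by
    apply key_orth μ f EQ hμpos Q
    intro ω ω' hω'
    simp only [hEQ, expOn, Q.cell_eq ω ω' hω']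
  have hcross : ∑ ω, μ ω * (EQ ω * (EP ω - EQ ω)) = 0 := by
    have : ∀ ω, μ ω * (EQ ω * (EP ω - EQ ω))
        = μ ω * (EQ ω * (f ω - EQ ω)) - μ ω * (EQ ω * (f ω - EP ω)) := by
      intro ω; ring
    rw [Finset.sum_congr rfl (fun ω _ => this ω), Finset.sum_sub_distrib, h1, h2, sub_zero]
  -- energy identity
  have hid : norm2 μ EP = norm2 μ EQ + ∑ ω, μ ω * (EP ω - EQ ω) ^ 2 := by
    have : ∀ ω, μ ω * EP ω ^ 2
        = μ ω * EQ ω ^ 2 + μ ω * (EP ω - EQ ω) ^ 2 + 2 * (μ ω * (EQ ω * (EP ω - EQ ω))) := by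
      intro ω; ring
    simp only [norm2, Finset.sum_congr rfl (fun ω _ => this ω), Finset.sum_add_distrib,
      ← Finset.mul_sum, hcross]
    ring
  rw [hid]
  have hbadne : (Finset.univ.filter (fun ω => ε < |EP ω - EQ ω|)).Nonempty := by
    by_contra hne
    rw [Finset.not_nonempty_iff_eq_empty] at hne
    rw [hne, Finset.sum_empty] at hdisagree
    linarith
  have hstep : δ * ε ^ 2 < ∑ ω ∈ Finset.univ.filter (fun ω => ε < |EP ω - EQ ω|),
      μ ω * (EP ω - EQ ω) ^ 2 := by
    calc δ * ε ^ 2 ≤ (∑ ω ∈ Finset.univ.filter (fun ω => ε < |EP ω - EQ ω|), μ ω) * ε ^ 2 := by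
          apply mul_le_mul_of_nonneg_right hdisagree (by positivity)
      _ = ∑ ω ∈ Finset.univ.filter (fun ω => ε < |EP ω - EQ ω|), μ ω * ε ^ 2 := by
          rw [Finset.sum_mul]
      _ < ∑ ω ∈ Finset.univ.filter (fun ω => ε < |EP ω - EQ ω|), μ ω * (EP ω - EQ ω) ^ 2 := by
          apply Finset.sum_lt_sum_of_nonempty hbadne
          intro ω hω
          rw [Finset.mem_filter] at hω
          have hε' : ε ^ 2 < (EP ω - EQ ω) ^ 2 := by
            have := hω.2
            have habs : ε < |EP ω - EQ ω| := this
            calc ε ^ 2 < |EP ω - EQ ω| ^ 2 := by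
                  apply pow_lt_pow_left₀ habs hε.le
                  · norm_num
              _ = (EP ω - EQ ω) ^ 2 := sq_abs _
          exact mul_lt_mul_of_pos_left hε' (hμpos ω)
  have hle : ∑ ω ∈ Finset.univ.filter (fun ω => ε < |EP ω - EQ ω|), μ ω * (EP ω - EQ ω) ^ 2
      ≤ ∑ ω, μ ω * (EP ω - EQ ω) ^ 2 := by
    apply Finset.sum_le_sum_of_subset_of_nonneg (Finset.filter_subset _ _)
    intro ω _ _
    exact mul_nonneg (hμpos ω).le (sq_nonneg _)
  linarith
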